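/- Let g be any subspace of the space of alternating 2-forms on ℝⁿ (identified with skew-symmetric endomorphisms via A(X,Y) = ⟨AX,Y⟩), and let m be its orthogonal complement with respect to the inner product ⟨A,B⟩ = ∑_{i<j} A(e_i,e_j)B(e_i,e_j). For a linear map Γ : ℝⁿ → m the following are equivalent: (1) there exists a linear map Σ : ℝⁿ → g such that Γ(Y)(X,Z) + Γ(Z)(X,Y) = Σ(Y)(X,Z) + Σ(Z)(X,Y) for all X,Y,Z ∈ ℝⁿ; (2) there exists an alternating 3-form T on ℝⁿ such that Γ(X) = proj_m(T(X,·,·)) for all X ∈ ℝⁿ. Moreover, if (2) holds with the 3-form T, then Σ(X) := −proj_g(T(X,·,·)) is a map satisfying the identity in (1). -/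

import Mathlib

open scoped BigOperators RealInnerProductSpace

noncomputable section

/-- `n`-dimensional Euclidean space. -/
abbrev E (n : ℕ) := EuclideanSpace ℝ (Fin n)

/-- Alternating 2-forms on `ℝⁿ`. -/
abbrev Form2 (n : ℕ) := (E n) [⋀^Fin 2]→ₗ[ℝ] ℝ

/-- Alternating 3-forms on `ℝⁿ`. -/
abbrev Form3 (n : ℕ) := (E n) [⋀^Fin 3]→ₗ[ℝ] ℝ

/-- The standard orthonormal basis vectors of `ℝⁿ`. -/
def stdBasis {n : ℕ} (i : Fin n) : E n := EuclideanSpace.single i 1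

/-- The inner product `⟨A,B⟩ = ∑_{i<j} A(e_i,e_j)·B(e_i,e_j)` on alternating 2-forms. -/
def ip {n : ℕ} (A B : Form2 n) : ℝ :=
  ∑ i : Fin n, ∑ j : Fin n, if i < j then
    A ![stdBasis i, stdBasis j] * B ![stdBasis i, stdBasis j] else 0

/-- The contraction `(s ⌟ T)(X) = ∑_{i<j} s(e_i,e_j)·T(e_i,e_j,X)` of a 3-form by a 2-form. -/
def hook {n : ℕ} (s : Form2 n) (T : Form3 n) (X : E n) : ℝ :=
  ∑ i : Fin n, ∑ j : Fin n, if i < j then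
    s ![stdBasis i, stdBasis j] * T ![stdBasis i, stdBasis j, X] else 0

/-- `IsOrthProj W p q` : `q` is the orthogonal projection (w.r.t. `ip`) of `p`
onto the subspace `W` of alternating 2-forms. -/
def IsOrthProj {n : ℕ} (W : Submodule ℝ (Form2 n)) (p q : Form2 n) : Prop :=
  q ∈ W ∧ ∀ r ∈ W, ip (p - q) r = 0

/-! ### Auxiliary lemmas -/

-- basic lemmas
lemma map_pair_same {n : ℕ} (A : Form2 n) (x y : E n) (h : x = y) : A ![x, y] = 0 :=
  A.map_eq_zero_of_eq _ (by simpa using h : ![x,y] 0 = ![x,y] 1) (by decide : (0:Fin 2) ≠ 1)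

lemma map_pair_swap {n : ℕ} (A : Form2 n) (x y : E n) : A ![y, x] = -A ![x, y] := by
  have h := A.map_swap ![x, y] (by decide : (0:Fin 2) ≠ 1)
  have e : (![x, y] ∘ Equiv.swap (0:Fin 2) 1) = ![y, x] := by
    funext k
    fin_cases k <;> simp [Equiv.swap_apply_left, Equiv.swap_apply_right]
  rwa [e] at h

lemma form2_ext {n : ℕ} (A : Form2 n)
    (h : ∀ i j : Fin n, i < j → A ![stdBasis i, stdBasis j] = 0) : A = 0 := by
  apply Module.Basis.ext_alternating (EuclideanSpace.basisFun (Fin n) ℝ).toBasis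
  intro v hv
  have hb : ∀ i : Fin n, (EuclideanSpace.basisFun (Fin n) ℝ).toBasis i = stdBasis i := by
    intro i
    simp [stdBasis, EuclideanSpace.basisFun_apply]
  have hv2 : (fun i : Fin 2 => (EuclideanSpace.basisFun (Fin n) ℝ).toBasis (v i))
      = ![stdBasis (v 0), stdBasis (v 1)] := by
    funext k; fin_cases k <;> simp [hb]
  rw [hv2]
  simp only [AlternatingMap.zero_apply]
  rcases lt_trichotomy (v 0) (v 1) with h1 | h1 | h1
  · exact h _ _ h1
  · exact absurd (hv h1) (by decide)
  · rw [map_pair_swap, h _ _ h1, neg_zero]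

/-- `ip` as a bilinear form. -/
def ipB {n : ℕ} : LinearMap.BilinForm ℝ (Form2 n) :=
  LinearMap.mk₂ ℝ ip
    (fun A A' C => by
      unfold ip
      rw [← Finset.sum_add_distrib]
      refine Finset.sum_congr rfl fun i _ => ?_
      rw [← Finset.sum_add_distrib]
      refine Finset.sum_congr rfl fun j _ => ?_
      split_ifs with h
      · simp [add_mul]
      · ring)
    (fun c A C => by
      unfold ip
      rw [Finset.smul_sum]
      refine Finset.sum_congr rfl fun i _ => ?_
      rw [Finset.smul_sum]
      refine Finset.sum_congr rfl fun j _ => ?_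
      split_ifs with h
      · simp [mul_assoc]
      · simp)
    (fun A C C' => by
      unfold ip
      rw [← Finset.sum_add_distrib]
      refine Finset.sum_congr rfl fun i _ => ?_
      rw [← Finset.sum_add_distrib]
      refine Finset.sum_congr rfl fun j _ => ?_
      split_ifs with h
      · simp [mul_add]
      · ring)
    (fun c A C => by
      unfold ip
      rw [Finset.smul_sum]
      refine Finset.sum_congr rfl fun i _ => ?_
      rw [Finset.smul_sum]
      refine Finset.sum_congr rfl fun j _ => ?_
      split_ifs with h
      · simp; ring
      · simp)

@[simp] lemma ipB_apply {n : ℕ} (A B : Form2 n) : ipB A B = ip A B := rfl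

lemma ip_symm {n : ℕ} (A B : Form2 n) : ip A B = ip B A := by
  unfold ip
  refine Finset.sum_congr rfl fun i _ => Finset.sum_congr rfl fun j _ => ?_
  split_ifs <;> ring

lemma ip_sub_left {n : ℕ} (A B C : Form2 n) : ip (A - B) C = ip A C - ip B C := by
  change ipB (A - B) C = ipB A C - ipB B C
  rw [map_sub, LinearMap.sub_apply]

lemma ip_neg_left {n : ℕ} (A C : Form2 n) : ip (-A) C = -ip A C := by
  change ipB (-A) C = -ipB A C
  rw [map_neg, LinearMap.neg_apply]

lemma ip_self_eq_zero {n : ℕ} {A : Form2 n} (h : ip A A = 0) : A = 0 := by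
  refine form2_ext A fun i j hij => ?_
  unfold ip at h
  have hnn : ∀ a : Fin n, ∀ b : Fin n, (0:ℝ) ≤ (if a < b then
      A ![stdBasis a, stdBasis b] * A ![stdBasis a, stdBasis b] else 0) := by
    intro a b
    split_ifs
    · exact mul_self_nonneg _
    · exact le_refl 0
  have h1 := (Finset.sum_eq_zero_iff_of_nonneg
    (fun a _ => Finset.sum_nonneg fun b _ => hnn a b)).1 h i (Finset.mem_univ i)
  have h2 := (Finset.sum_eq_zero_iff_of_nonneg
    (fun b _ => hnn i b)).1 h1 j (Finset.mem_univ j)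
  rw [if_pos hij] at h2
  exact mul_self_eq_zero.1 h2

lemma ipB_nondeg {n : ℕ} : (ipB (n := n)).Nondegenerate := ⟨fun A h =>
  ip_self_eq_zero (by simpa using h A), fun A h => ip_self_eq_zero (by simpa using h A)⟩

lemma ipB_refl {n : ℕ} : (ipB (n := n)).IsRefl := fun A B h => by
  simpa [ip_symm B A] using h

/-- Coercion to multilinear maps as a linear map. -/
def toML {n : ℕ} : Form2 n →ₗ[ℝ] MultilinearMap ℝ (fun _ : Fin 2 => E n) ℝ where
  toFun A := A.toMultilinearMap
  map_add' _ _ := rfl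
  map_smul' _ _ := rfl

instance {n : ℕ} : FiniteDimensional ℝ (Form2 n) :=
  FiniteDimensional.of_injective (toML (n := n))
    (fun A B h => AlternatingMap.coe_multilinearMap_injective h)

/-- Uncurrying a linear family of 2-forms satisfying the cyclic condition into a 3-form. -/
def uncurry3 {n : ℕ} (D : E n →ₗ[ℝ] Form2 n)
    (hD : ∀ X Y Z : E n, D Y ![X, Z] + D Z ![X, Y] = 0) : Form3 n where
  toMultilinearMap := LinearMap.uncurryLeft ((toML (n := n)).comp D)
  map_eq_zero_of_eq' v i j hv hij := by
    have ht : Fin.tail v = ![v 1, v 2] := by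
      funext k; fin_cases k <;> rfl
    show D (v 0) (Fin.tail v) = 0
    rw [ht]
    fin_cases i <;> fin_cases j <;> simp_all
    all_goals first
      | exact map_pair_same _ _ _ rfl
      | (have h1 := hD (v 1) (v 1) (v 2)
         rw [map_pair_same (D (v 2)) _ _ rfl] at h1
         linarith)
      | (have h1 := hD (v 1) (v 2) (v 2)
         linarith)
      | (have h1 := hD (v 0) (v 0) (v 2)
         rw [map_pair_same (D (v 2)) _ _ rfl] at h1
         linarith)
      | (have h1 := hD (v 1) (v 0) (v 0)
         linarith)

@[simp] lemma uncurry3_apply {n : ℕ} (D : E n →ₗ[ℝ] Form2 n)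
    (hD : ∀ X Y Z : E n, D Y ![X, Z] + D Z ![X, Y] = 0) (v : Fin 3 → E n) :
    uncurry3 D hD v = D (v 0) (Fin.tail v) := rfl

lemma uncurry3_curryLeft {n : ℕ} (D : E n →ₗ[ℝ] Form2 n)
    (hD : ∀ X Y Z : E n, D Y ![X, Z] + D Z ![X, Y] = 0) (X : E n) :
    (uncurry3 D hD).curryLeft X = D X := by
  ext v
  rw [AlternatingMap.curryLeft_apply_apply, uncurry3_apply, Matrix.cons_val_zero]
  congr 1

lemma triple_sum {n : ℕ} (T : Form3 n) (X Y Z : E n) :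
    T ![Y, X, Z] + T ![Z, X, Y] = 0 := by
  have h01 : ∀ a b c : E n, T ![b, a, c] = -T ![a, b, c] := by
    intro a b c
    have h := T.map_swap ![a, b, c] (by decide : (0:Fin 3) ≠ 1)
    have e : (![a, b, c] ∘ Equiv.swap (0:Fin 3) 1) = ![b, a, c] := by
      funext k
      fin_cases k <;>
        simp [Equiv.swap_apply_left, Equiv.swap_apply_right,
          Equiv.swap_apply_of_ne_of_ne]
    rwa [e] at h
  have h12 : ∀ a b c : E n, T ![a, c, b] = -T ![a, b, c] := by
    intro a b c
    have h := T.map_swap ![a, b, c] (by decide : (1:Fin 3) ≠ 2)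
    have e : (![a, b, c] ∘ Equiv.swap (1:Fin 3) 2) = ![a, c, b] := by
      funext k
      fin_cases k <;>
        simp [Equiv.swap_apply_left, Equiv.swap_apply_right,
          Equiv.swap_apply_of_ne_of_ne]
    rwa [e] at h
  have e1 := h01 X Y Z
  have e2 := h12 X Z Y
  have e3 := h01 X Z Y
  have e4 := h01 Y X Z
  linarith [h01 X Y Z, h01 X Z Y, h12 X Y Z]

/-- pointwise content of Theorem 5.1 of the paper.
For a subspace `g` of alternating 2-forms on `ℝⁿ` with orthogonal complement `m`,
and a linear map `Γ : ℝⁿ → m`, the existence of a linear `Σ : ℝⁿ → g` with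
`Γ(Y)(X,Z) + Γ(Z)(X,Y) = Σ(Y)(X,Z) + Σ(Z)(X,Y)` is equivalent to the existence of a
3-form `T` with `Γ(X) = proj_m(T(X,·,·))`; moreover `Σ(X) = −proj_g(T(X,·,·))` then works. -/
theorem stmt_0 {n : ℕ} (g m : Submodule ℝ (Form2 n))
    (hm : ∀ A : Form2 n, A ∈ m ↔ ∀ B ∈ g, ip A B = 0)
    (Γ : E n →ₗ[ℝ] Form2 n) (hΓ : ∀ X, Γ X ∈ m) :
    ((∃ S : E n →ₗ[ℝ] Form2 n, (∀ X, S X ∈ g) ∧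
        ∀ X Y Z : E n, Γ Y ![X, Z] + Γ Z ![X, Y] = S Y ![X, Z] + S Z ![X, Y])
      ↔ ∃ T : Form3 n, ∀ X, IsOrthProj m (T.curryLeft X) (Γ X)) ∧
    (∀ T : Form3 n, (∀ X, IsOrthProj m (T.curryLeft X) (Γ X)) →
      ∀ P : E n → Form2 n, (∀ X, IsOrthProj g (T.curryLeft X) (P X)) →
        ∀ X Y Z : E n,
          Γ Y ![X, Z] + Γ Z ![X, Y] = (-(P Y)) ![X, Z] + (-(P Z)) ![X, Y]) := by
  have hmg : m = (ipB (n := n)).orthogonal g := by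
    ext A
    rw [hm]
    constructor
    · intro h b hb
      show ipB b A = 0
      rw [ipB_apply, ip_symm]
      exact h b hb
    · intro h b hb
      rw [ip_symm]
      exact h b hb
  have hgm : g = (ipB (n := n)).orthogonal m := by
    conv_lhs => rw [← LinearMap.BilinForm.orthogonal_orthogonal ipB_nondeg ipB_refl g]
    rw [← hmg]
  constructor
  · constructor
    · rintro ⟨S, hSg, hid⟩
      have hD : ∀ X Y Z : E n, (Γ - S) Y ![X, Z] + (Γ - S) Z ![X, Y] = 0 := by
        intro X Y Z
        simp only [LinearMap.sub_apply, AlternatingMap.sub_apply]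
        linarith [hid X Y Z]
      refine ⟨uncurry3 (Γ - S) hD, fun X => ⟨hΓ X, fun r hr => ?_⟩⟩
      rw [uncurry3_curryLeft]
      have h1 : (Γ - S) X - Γ X = -(S X) := by
        simp only [LinearMap.sub_apply]
        abel
      rw [h1, ip_neg_left, ip_symm, (hm r).1 hr _ (hSg X), neg_zero]
    · rintro ⟨T, hT⟩
      refine ⟨Γ - T.curryLeft, fun X => ?_, fun X Y Z => ?_⟩
      · rw [hgm]
        intro r hr
        show ipB r ((Γ - T.curryLeft) X) = 0
        rw [ipB_apply, ip_symm]
        have h3 : (Γ - T.curryLeft) X = -(T.curryLeft X - Γ X) := by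
          simp only [LinearMap.sub_apply]
          abel
        rw [h3, ip_neg_left, (hT X).2 r hr, neg_zero]
      · simp only [LinearMap.sub_apply, AlternatingMap.sub_apply,
          AlternatingMap.curryLeft_apply_apply]
        linarith [triple_sum T X Y Z]
  · intro T hT P hP X Y Z
    have key : ∀ W : E n, T.curryLeft W = Γ W + P W := by
      intro W
      have hdg : ∀ b ∈ g, ip (T.curryLeft W - Γ W - P W) b = 0 := by
        intro b hb
        rw [sub_right_comm, ip_sub_left, (hP W).2 b hb, (hm (Γ W)).1 (hΓ W) b hb,
          sub_zero]
      have hdm : ∀ r ∈ m, ip (T.curryLeft W - Γ W - P W) r = 0 := by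
        intro r hr
        have hP0 : ip (P W) r = 0 := by
          rw [ip_symm]
          exact (hm r).1 hr _ (hP W).1
        rw [ip_sub_left, (hT W).2 r hr, hP0, sub_zero]
      have hd0 : T.curryLeft W - Γ W - P W = 0 :=
        ip_self_eq_zero (hdm _ ((hm _).2 hdg))
      rw [sub_sub] at hd0
      exact sub_eq_zero.1 hd0
    have e1 := DFunLike.congr_fun (key Y) ![X, Z]
    have e2 := DFunLike.congr_fun (key Z) ![X, Y]
    simp only [AlternatingMap.add_apply, AlternatingMap.curryLeft_apply_apply,
      AlternatingMap.neg_apply] at e1 e2 ⊢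
    linarith [triple_sum T X Y Z]
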